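/- Let X be a Lipschitz quaternion which is primitive (the gcd of its four integer components is 1) and whose norm normSq X is odd, and let p be a prime number dividing normSq X. Then there exists Y ∈ Quaternion ℤ with normSq Y = p such that Y left-divides X (i.e. ∃ U, X = Y * U); moreover if Y and Y' both have norm p and both left-divide X, then there exists a unit quaternion E ∈ {±1, ±i, ±j, ±k} with Y' = Y * E. -/

import Mathlib

open Quaternion

section LipschitzHelpers

private lemma bal_odd (m z : ℤ) (hm : 0 < m) (hodd : m % 2 = 1) :
    ∃ q r : ℤ, z = m * q + r ∧ 2*r ≤ m - 1 ∧ 1 - m ≤ 2*r := by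
  have h0 : 0 ≤ z % m := Int.emod_nonneg z hm.ne'
  have h1 : z % m < m := Int.emod_lt_of_pos z hm
  have hz : m * (z / m) + z % m = z := Int.mul_ediv_add_emod z m
  by_cases h : 2 * (z % m) ≤ m - 1
  · exact ⟨z/m, z%m, by omega, h, by omega⟩
  · refine ⟨z/m + 1, z%m - m, ?_, by omega, by omega⟩
    rw [mul_add, mul_one]; omega

private lemma dvd_smul_quat (m : ℤ) (Z : ℍ[ℤ]) (h1 : m ∣ Z.re) (h2 : m ∣ Z.imI)
    (h3 : m ∣ Z.imJ) (h4 : m ∣ Z.imK) : ∃ W, Z = m • W := by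
  obtain ⟨a, ha⟩ := h1; obtain ⟨b, hb⟩ := h2
  obtain ⟨c, hc⟩ := h3; obtain ⟨d, hd⟩ := h4
  exact ⟨⟨a, b, c, d⟩, by ext <;> simp [ha, hb, hc, hd] <;> rfl⟩

private lemma quat_smul_cancel {m : ℤ} (hm : m ≠ 0) {A B : ℍ[ℤ]} (h : m • A = m • B) :
    A = B :=
  smul_right_injective ℍ[ℤ] hm h

private lemma normSq_zsmul' (z : ℤ) (A : ℍ[ℤ]) : normSq (z • A) = z^2 * normSq A := by
  rw [normSq_def', normSq_def']
  simp only [Quaternion.re_smul, Quaternion.imI_smul, Quaternion.imJ_smul,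
    Quaternion.imK_smul, smul_eq_mul]
  ring

private lemma star_zsmul' (z : ℤ) (A : ℍ[ℤ]) : star (z • A) = z • star A := by
  ext <;> simp [mul_comm]

private lemma quat_reduce (m : ℤ) (hm : 0 < m) (hodd : m % 2 = 1) (Y : ℍ[ℤ]) :
    ∃ Q R : ℍ[ℤ], Y = m • Q + R ∧ normSq R ≤ (m-1)^2 ∧ ∃ K, normSq Y = m * K + normSq R := by
  obtain ⟨q1, r1, h1, b1, b1'⟩ := bal_odd m Y.re hm hodd
  obtain ⟨q2, r2, h2, b2, b2'⟩ := bal_odd m Y.imI hm hodd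
  obtain ⟨q3, r3, h3, b3, b3'⟩ := bal_odd m Y.imJ hm hodd
  obtain ⟨q4, r4, h4, b4, b4'⟩ := bal_odd m Y.imK hm hodd
  refine ⟨⟨q1,q2,q3,q4⟩, ⟨r1,r2,r3,r4⟩, by ext <;> simp [h1,h2,h3,h4] <;> rfl, ?_, ?_⟩
  · have hR : normSq (⟨r1,r2,r3,r4⟩ : ℍ[ℤ]) = r1^2+r2^2+r3^2+r4^2 := normSq_def' _
    rw [hR]
    nlinarith [sq_nonneg (2*r1), sq_nonneg (2*r2), sq_nonneg (2*r3), sq_nonneg (2*r4)]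
  · refine ⟨m*(q1^2+q2^2+q3^2+q4^2) + 2*(q1*r1+q2*r2+q3*r3+q4*r4), ?_⟩
    have hR : normSq (⟨r1,r2,r3,r4⟩ : ℍ[ℤ]) = r1^2+r2^2+r3^2+r4^2 := normSq_def' _
    rw [normSq_def', hR, h1, h2, h3, h4]; ring

private lemma keyB {P : ℤ} (hP : Prime P) {X R W : ℍ[ℤ]}
    (hX : ¬ (P ∣ X.re ∧ P ∣ X.imI ∧ P ∣ X.imJ ∧ P ∣ X.imK))
    (h : star R * X = P • W) : P ∣ normSq R := by
  have key : normSq R • X = P • (R * W) := by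
    have h' : R * (star R * X) = R * (P • W) := by rw [h]
    rw [← mul_assoc, self_mul_star, coe_mul_eq_smul, mul_smul_comm] at h'
    exact h'
  have h1 : normSq R * X.re = P * (R*W).re := by
    have := congrArg QuaternionAlgebra.re key; simpa using this
  have h2 : normSq R * X.imI = P * (R*W).imI := by
    have := congrArg QuaternionAlgebra.imI key; simpa using this
  have h3 : normSq R * X.imJ = P * (R*W).imJ := by
    have := congrArg QuaternionAlgebra.imJ key; simpa using this
  have h4 : normSq R * X.imK = P * (R*W).imK := by
    have := congrArg QuaternionAlgebra.imK key; simpa using this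
  by_contra hnd
  exact hX ⟨(hP.dvd_or_dvd ⟨_, h1⟩).resolve_left hnd,
    (hP.dvd_or_dvd ⟨_, h2⟩).resolve_left hnd,
    (hP.dvd_or_dvd ⟨_, h3⟩).resolve_left hnd,
    (hP.dvd_or_dvd ⟨_, h4⟩).resolve_left hnd⟩

private lemma sq_emod_two (a : ℤ) : a^2 % 2 = a % 2 := by
  rcases Int.emod_two_eq a with h|h <;>
    · have h2 : a^2 % 2 = (a%2) * (a%2) % 2 := by rw [sq, Int.mul_emod]
      rw [h2, h]; norm_num

private lemma halving {Y : ℍ[ℤ]} (heven : (2:ℤ) ∣ normSq Y) :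
    ∃ Y' u : ℍ[ℤ], normSq u = 2 ∧ Y * u = Y' + Y' := by
  obtain ⟨a, b, c, d⟩ := Y
  have hN : normSq (⟨a,b,c,d⟩ : ℍ[ℤ]) = a^2+b^2+c^2+d^2 := normSq_def' _
  rw [hN] at heven
  have e1 := sq_emod_two a; have e2 := sq_emod_two b
  have e3 := sq_emod_two c; have e4 := sq_emod_two d
  have h2 : (a^2+b^2+c^2+d^2) % 2 = 0 := Int.emod_eq_zero_of_dvd heven
  have tri : (2:ℤ) ∣ (a - b) ∨ (2:ℤ) ∣ (a - c) ∨ (2:ℤ) ∣ (a - d) := by omega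
  have hsum : (2:ℤ) ∣ (a + b + c + d) := by omega
  rcases tri with h|h|h
  · obtain ⟨s, hs⟩ : (2:ℤ) ∣ (a+b) := by omega
    obtain ⟨t, ht⟩ : (2:ℤ) ∣ (b-a) := by omega
    obtain ⟨v, hv⟩ : (2:ℤ) ∣ (c-d) := by omega
    obtain ⟨w, hw⟩ : (2:ℤ) ∣ (c+d) := by omega
    refine ⟨⟨s,t,v,w⟩, ⟨1,-1,0,0⟩, (normSq_def' _).trans (by norm_num), ?_⟩
    apply Quaternion.ext
    · refine (Quaternion.re_mul _ _).trans (Eq.trans ?_ (Quaternion.re_add _ _).symm); dsimp only; omega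
    · refine (Quaternion.imI_mul _ _).trans (Eq.trans ?_ (Quaternion.imI_add _ _).symm); dsimp only; omega
    · refine (Quaternion.imJ_mul _ _).trans (Eq.trans ?_ (Quaternion.imJ_add _ _).symm); dsimp only; omega
    · refine (Quaternion.imK_mul _ _).trans (Eq.trans ?_ (Quaternion.imK_add _ _).symm); dsimp only; omega
  · obtain ⟨s, hs⟩ : (2:ℤ) ∣ (a+c) := by omega
    obtain ⟨t, ht⟩ : (2:ℤ) ∣ (b+d) := by omega
    obtain ⟨v, hv⟩ : (2:ℤ) ∣ (c-a) := by omega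
    obtain ⟨w, hw⟩ : (2:ℤ) ∣ (d-b) := by omega
    refine ⟨⟨s,t,v,w⟩, ⟨1,0,-1,0⟩, (normSq_def' _).trans (by norm_num), ?_⟩
    apply Quaternion.ext
    · refine (Quaternion.re_mul _ _).trans (Eq.trans ?_ (Quaternion.re_add _ _).symm); dsimp only; omega
    · refine (Quaternion.imI_mul _ _).trans (Eq.trans ?_ (Quaternion.imI_add _ _).symm); dsimp only; omega
    · refine (Quaternion.imJ_mul _ _).trans (Eq.trans ?_ (Quaternion.imJ_add _ _).symm); dsimp only; omega
    · refine (Quaternion.imK_mul _ _).trans (Eq.trans ?_ (Quaternion.imK_add _ _).symm); dsimp only; omega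
  · obtain ⟨s, hs⟩ : (2:ℤ) ∣ (a+d) := by omega
    obtain ⟨t, ht⟩ : (2:ℤ) ∣ (b-c) := by omega
    obtain ⟨v, hv⟩ : (2:ℤ) ∣ (c+b) := by omega
    obtain ⟨w, hw⟩ : (2:ℤ) ∣ (d-a) := by omega
    refine ⟨⟨s,t,v,w⟩, ⟨1,0,0,-1⟩, (normSq_def' _).trans (by norm_num), ?_⟩
    apply Quaternion.ext
    · refine (Quaternion.re_mul _ _).trans (Eq.trans ?_ (Quaternion.re_add _ _).symm); dsimp only; omega
    · refine (Quaternion.imI_mul _ _).trans (Eq.trans ?_ (Quaternion.imI_add _ _).symm); dsimp only; omega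
    · refine (Quaternion.imJ_mul _ _).trans (Eq.trans ?_ (Quaternion.imJ_add _ _).symm); dsimp only; omega
    · refine (Quaternion.imK_mul _ _).trans (Eq.trans ?_ (Quaternion.imK_add _ _).symm); dsimp only; omega

private lemma descent (p : ℕ) (hp : Nat.Prime p) (hpodd : (p:ℤ) % 2 = 1)
    (X : ℍ[ℤ]) (hX : ¬ ((p:ℤ) ∣ X.re ∧ (p:ℤ) ∣ X.imI ∧ (p:ℤ) ∣ X.imJ ∧ (p:ℤ) ∣ X.imK)) :
    ∀ n : ℕ, ∀ Y : ℍ[ℤ], normSq Y = (p:ℤ) * n → 0 < n → n < p →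
      (∃ W, star Y * X = (p:ℤ) • W) →
      ∃ Y₀ : ℍ[ℤ], normSq Y₀ = (p:ℤ) ∧ ∃ W₀, star Y₀ * X = (p:ℤ) • W₀ := by
  have hpp : Prime ((p:ℕ) : ℤ) := Nat.prime_iff_prime_int.mp hp
  have hpne : ((p:ℕ):ℤ) ≠ 0 := by exact_mod_cast hp.pos.ne'
  intro n
  induction n using Nat.strong_induction_on with
  | _ n ih =>
  intro Y hY hn hnp hinv
  rcases eq_or_lt_of_le (Nat.succ_le_of_lt hn) with h1 | h1
  · refine ⟨Y, ?_, hinv⟩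
    rw [hY, ← h1]; simp
  rcases Nat.even_or_odd n with ⟨n', hn'⟩ | hoddn
  · -- n even
    have heven : (2:ℤ) ∣ normSq Y := ⟨(p:ℤ)*n', by rw [hY, hn']; push_cast; ring⟩
    obtain ⟨Y', u, hu, hmul⟩ := halving heven
    have hdouble : normSq (Y' + Y') = 4 * normSq Y' := by
      rw [normSq_def', normSq_def']; simp; ring
    have hY' : normSq Y' = (p:ℤ) * n' := by
      have hm := map_mul normSq Y u
      rw [hmul, hu, hdouble, hY, hn'] at hm
      push_cast at hm ⊢
      linarith
    obtain ⟨W, hW⟩ := hinv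
    have hinv2 : star Y' * X + star Y' * X = (p:ℤ) • (star u * W) := by
      have e : star (Y * u) * X = star u * (star Y * X) := by
        rw [star_mul, mul_assoc]
      rw [hmul, hW, mul_smul_comm] at e
      rw [← e, star_add, add_mul]
    obtain ⟨W', hW'⟩ : ∃ W', star Y' * X = (p:ℤ) • W' := by
      have hpd2 : ¬ ((p:ℤ) ∣ 2) := by
        intro hd
        have hle := Int.le_of_dvd (by norm_num) hd
        have h2 := hp.two_le
        have h2' : (2:ℤ) ≤ (p:ℤ) := by exact_mod_cast h2
        omega
      refine dvd_smul_quat _ _ ?_ ?_ ?_ ?_ <;>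
      · first
        | (have := congrArg QuaternionAlgebra.re hinv2
           simp only [Quaternion.re_add, Quaternion.re_smul, smul_eq_mul] at this
           exact (hpp.dvd_or_dvd (show (p:ℤ) ∣ 2 * (star Y' * X).re by rw [two_mul]; exact ⟨_, this⟩)).resolve_left hpd2)
        | (have := congrArg QuaternionAlgebra.imI hinv2
           simp only [Quaternion.imI_add, Quaternion.imI_smul, smul_eq_mul] at this
           exact (hpp.dvd_or_dvd (show (p:ℤ) ∣ 2 * (star Y' * X).imI by rw [two_mul]; exact ⟨_, this⟩)).resolve_left hpd2)
        | (have := congrArg QuaternionAlgebra.imJ hinv2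
           simp only [Quaternion.imJ_add, Quaternion.imJ_smul, smul_eq_mul] at this
           exact (hpp.dvd_or_dvd (show (p:ℤ) ∣ 2 * (star Y' * X).imJ by rw [two_mul]; exact ⟨_, this⟩)).resolve_left hpd2)
        | (have := congrArg QuaternionAlgebra.imK hinv2
           simp only [Quaternion.imK_add, Quaternion.imK_smul, smul_eq_mul] at this
           exact (hpp.dvd_or_dvd (show (p:ℤ) ∣ 2 * (star Y' * X).imK by rw [two_mul]; exact ⟨_, this⟩)).resolve_left hpd2)
    exact ih n' (by omega) Y' hY' (by omega) (by omega) ⟨W', hW'⟩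
  · -- n odd, n > 1
    have hm0 : (0:ℤ) < (n:ℤ) := by exact_mod_cast hn
    have hmodd : ((n:ℤ)) % 2 = 1 := by
      rcases hoddn with ⟨k, hk⟩; omega
    obtain ⟨Q, R, hQR, hRb, K, hK⟩ := quat_reduce (n:ℤ) hm0 hmodd Y
    have hRne : R ≠ 0 := by
      intro h0
      rw [h0, add_zero] at hQR
      have hsq : normSq Y = (n:ℤ)^2 * normSq Q := by rw [hQR, normSq_zsmul']
      rw [hY] at hsq
      have hdvd : (n:ℤ) ∣ (p:ℤ) := by
        refine ⟨normSq Q, ?_⟩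
        exact mul_left_cancel₀ (show (n:ℤ) ≠ 0 by omega)
          (show (n:ℤ) * (p:ℤ) = (n:ℤ) * ((n:ℤ) * normSq Q) by linear_combination hsq)
      have hnat : (n:ℕ) ∣ p := by exact_mod_cast hdvd
      rcases (Nat.Prime.eq_one_or_self_of_dvd hp n hnat) with h|h <;> omega
    have hRpos : 0 < normSq R := by
      rcases lt_or_eq_of_le (normSq_nonneg (a := R)) with h|h
      · exact h
      · exact absurd (normSq_eq_zero.mp h.symm) hRne
    obtain ⟨w, hw⟩ : (n:ℤ) ∣ normSq R := ⟨(p:ℤ) - K, by linear_combination hY - hK⟩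
    have hwpos : 0 < w := by nlinarith
    have hwlt : w < (n:ℤ) := by nlinarith
    have hsplit : Y * star R = (n:ℤ) • (Q * star R + (w : ℍ[ℤ])) := by
      rw [hQR, add_mul, smul_mul_assoc, self_mul_star, hw]
      ext <;> simp [mul_add]
    set Y' : ℍ[ℤ] := Q * star R + (w : ℍ[ℤ]) with hY'def
    have hnormY' : normSq Y' = (p:ℤ) * w := by
      have e1 : normSq (Y * star R) = (p:ℤ) * (n:ℤ) * ((n:ℤ) * w) := by
        rw [map_mul, normSq_star, hY, hw]
      rw [hsplit, normSq_zsmul'] at e1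
      have : (n:ℤ) ≠ 0 := by omega
      nlinarith [e1]
    obtain ⟨W, hW⟩ := hinv
    have hinv2 : (n:ℤ) • (star Y' * X) = (p:ℤ) • (R * W) := by
      have e : star (Y * star R) * X = R * (star Y * X) := by
        rw [star_mul, star_star, mul_assoc]
      rw [hsplit, hW, star_zsmul', smul_mul_assoc, mul_smul_comm] at e
      exact e
    have hpdn : ¬ ((p:ℤ) ∣ (n:ℤ)) := by
      intro hd
      have hle := Int.le_of_dvd (by omega) hd
      have h2' : ((p:ℕ):ℤ) ≤ ((n:ℕ):ℤ) := hle
      have : p ≤ n := by exact_mod_cast h2'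
      omega
    obtain ⟨W', hW'⟩ : ∃ W', star Y' * X = (p:ℤ) • W' := by
      refine dvd_smul_quat _ _ ?_ ?_ ?_ ?_
      · have := congrArg QuaternionAlgebra.re hinv2
        simp only [Quaternion.re_smul, smul_eq_mul] at this
        exact (hpp.dvd_or_dvd (show (p:ℤ) ∣ (n:ℤ) * (star Y' * X).re from ⟨_, this⟩)).resolve_left hpdn
      · have := congrArg QuaternionAlgebra.imI hinv2
        simp only [Quaternion.imI_smul, smul_eq_mul] at this
        exact (hpp.dvd_or_dvd (show (p:ℤ) ∣ (n:ℤ) * (star Y' * X).imI from ⟨_, this⟩)).resolve_left hpdn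
      · have := congrArg QuaternionAlgebra.imJ hinv2
        simp only [Quaternion.imJ_smul, smul_eq_mul] at this
        exact (hpp.dvd_or_dvd (show (p:ℤ) ∣ (n:ℤ) * (star Y' * X).imJ from ⟨_, this⟩)).resolve_left hpdn
      · have := congrArg QuaternionAlgebra.imK hinv2
        simp only [Quaternion.imK_smul, smul_eq_mul] at this
        exact (hpp.dvd_or_dvd (show (p:ℤ) ∣ (n:ℤ) * (star Y' * X).imK from ⟨_, this⟩)).resolve_left hpdn
    refine ih w.toNat (by omega) Y' ?_ (by omega) (by omega) ⟨W', hW'⟩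
    rw [hnormY']
    congr 1
    omega

private lemma unit_mem (E : ℍ[ℤ]) (h : normSq E = 1) :
    E ∈ ({1, -1, ⟨0,1,0,0⟩, ⟨0,-1,0,0⟩, ⟨0,0,1,0⟩, ⟨0,0,-1,0⟩,
          ⟨0,0,0,1⟩, ⟨0,0,0,-1⟩} : Set (Quaternion ℤ)) := by
  obtain ⟨a,b,c,d⟩ := E
  replace h : a^2+b^2+c^2+d^2 = 1 := (normSq_def' _).symm.trans h
  have ha : -1 ≤ a ∧ a ≤ 1 := by
    constructor <;> nlinarith [sq_nonneg b, sq_nonneg c, sq_nonneg d, sq_nonneg (a+1), sq_nonneg (a-1)]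
  have hb : -1 ≤ b ∧ b ≤ 1 := by
    constructor <;> nlinarith [sq_nonneg a, sq_nonneg c, sq_nonneg d, sq_nonneg (b+1), sq_nonneg (b-1)]
  have hc : -1 ≤ c ∧ c ≤ 1 := by
    constructor <;> nlinarith [sq_nonneg b, sq_nonneg a, sq_nonneg d, sq_nonneg (c+1), sq_nonneg (c-1)]
  have hd : -1 ≤ d ∧ d ≤ 1 := by
    constructor <;> nlinarith [sq_nonneg b, sq_nonneg c, sq_nonneg a, sq_nonneg (d+1), sq_nonneg (d-1)]
  obtain ⟨ha1, ha2⟩ := ha; obtain ⟨hb1, hb2⟩ := hb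
  obtain ⟨hc1, hc2⟩ := hc; obtain ⟨hd1, hd2⟩ := hd
  have ha' : (a = 0 ∧ a^2 = 0) ∨ (a = 1 ∧ a^2 = 1) ∨ (a = -1 ∧ a^2 = 1) := by
    interval_cases a <;> norm_num
  have hb' : (b = 0 ∧ b^2 = 0) ∨ (b = 1 ∧ b^2 = 1) ∨ (b = -1 ∧ b^2 = 1) := by
    interval_cases b <;> norm_num
  have hc' : (c = 0 ∧ c^2 = 0) ∨ (c = 1 ∧ c^2 = 1) ∨ (c = -1 ∧ c^2 = 1) := by
    interval_cases c <;> norm_num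
  have hd' : (d = 0 ∧ d^2 = 0) ∨ (d = 1 ∧ d^2 = 1) ∨ (d = -1 ∧ d^2 = 1) := by
    interval_cases d <;> norm_num
  show _ = _ ∨ _ = _ ∨ _ = _ ∨ _ = _ ∨ _ = _ ∨ _ = _ ∨ _ = _ ∨ _ = _
  generalize hA : a^2 = A at h ha'
  generalize hB : b^2 = B at h hb'
  generalize hC : c^2 = C at h hc'
  generalize hD : d^2 = D at h hd'
  have key : (a=1∧b=0∧c=0∧d=0) ∨ (a=-1∧b=0∧c=0∧d=0) ∨ (b=1∧a=0∧c=0∧d=0) ∨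
      (b=-1∧a=0∧c=0∧d=0) ∨ (c=1∧a=0∧b=0∧d=0) ∨ (c=-1∧a=0∧b=0∧d=0) ∨
      (d=1∧a=0∧b=0∧c=0) ∨ (d=-1∧a=0∧b=0∧c=0) := by
    clear ha1 ha2 hb1 hb2 hc1 hc2 hd1 hd2
    rcases ha' with ⟨h1,h1'⟩|⟨h1,h1'⟩|⟨h1,h1'⟩ <;>
      rcases hb' with ⟨h2,h2'⟩|⟨h2,h2'⟩|⟨h2,h2'⟩ <;>
      rcases hc' with ⟨h3,h3'⟩|⟨h3,h3'⟩|⟨h3,h3'⟩ <;>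
      rcases hd' with ⟨h4,h4'⟩|⟨h4,h4'⟩|⟨h4,h4'⟩ <;>
      subst h1 <;> subst h2 <;> subst h3 <;> subst h4 <;>
      subst h1' <;> subst h2' <;> subst h3' <;> subst h4' <;>
      omega
  rcases key with ⟨h1,h2,h3,h4⟩|⟨h1,h2,h3,h4⟩|⟨h1,h2,h3,h4⟩|⟨h1,h2,h3,h4⟩|⟨h1,h2,h3,h4⟩|⟨h1,h2,h3,h4⟩|⟨h1,h2,h3,h4⟩|⟨h1,h2,h3,h4⟩
  · exact Or.inl (by ext <;> simp [h1, h2, h3, h4])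
  · exact Or.inr (Or.inl (by ext <;> simp [h1, h2, h3, h4]))
  · exact Or.inr (Or.inr (Or.inl (by ext <;> simp [h1, h2, h3, h4])))
  · exact Or.inr (Or.inr (Or.inr (Or.inl (by ext <;> simp [h1, h2, h3, h4]))))
  · exact Or.inr (Or.inr (Or.inr (Or.inr (Or.inl (by ext <;> simp [h1, h2, h3, h4])))))
  · exact Or.inr (Or.inr (Or.inr (Or.inr (Or.inr (Or.inl (by ext <;> simp [h1, h2, h3, h4]))))))
  · exact Or.inr (Or.inr (Or.inr (Or.inr (Or.inr (Or.inr (Or.inl (by ext <;> simp [h1, h2, h3, h4])))))))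
  · exact Or.inr (Or.inr (Or.inr (Or.inr (Or.inr (Or.inr (Or.inr (by ext <;> simp [h1, h2, h3, h4])))))))

end LipschitzHelpers

/-- An odd primitive Lipschitz quaternion has a left divisor of norm `p` for every
prime `p` dividing its norm, unique modulo right association by a unit
quaternion `±1, ±i, ±j, ±k`. -/
theorem lipschitz_quaternion_prime_left_factor (X : Quaternion ℤ)
    (hprim : Int.gcd (Int.gcd (Int.gcd X.re X.imI) X.imJ) X.imK = 1)
    (hodd : Odd (Quaternion.normSq X))
    (p : ℕ) (hp : Nat.Prime p) (hdvd : (p : ℤ) ∣ Quaternion.normSq X) :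
    (∃ Y : Quaternion ℤ, Quaternion.normSq Y = (p : ℤ) ∧
        ∃ U : Quaternion ℤ, X = Y * U) ∧
    (∀ Y Y' : Quaternion ℤ,
      Quaternion.normSq Y = (p : ℤ) → (∃ U : Quaternion ℤ, X = Y * U) →
      Quaternion.normSq Y' = (p : ℤ) → (∃ U : Quaternion ℤ, X = Y' * U) →
      ∃ E ∈ ({1, -1, ⟨0,1,0,0⟩, ⟨0,-1,0,0⟩, ⟨0,0,1,0⟩, ⟨0,0,-1,0⟩,
              ⟨0,0,0,1⟩, ⟨0,0,0,-1⟩} : Set (Quaternion ℤ)),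
        Y' = Y * E) := by
  have hpp : Prime ((p:ℕ) : ℤ) := Nat.prime_iff_prime_int.mp hp
  have hp2 : 2 ≤ p := hp.two_le
  have hp0 : (0:ℤ) < (p:ℤ) := by exact_mod_cast hp.pos
  obtain ⟨s, hs⟩ := hdvd
  have hpodd : ((p:ℕ):ℤ) % 2 = 1 := by
    have hne : p ≠ 2 := by
      rintro rfl
      obtain ⟨k, hk⟩ := hodd
      push_cast at hs
      omega
    have h2 : p % 2 = 1 := Nat.odd_iff.mp (hp.odd_of_ne_two hne)
    omega
  have hX : ¬ ((p:ℤ) ∣ X.re ∧ (p:ℤ) ∣ X.imI ∧ (p:ℤ) ∣ X.imJ ∧ (p:ℤ) ∣ X.imK) := by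
    rintro ⟨d1, d2, d3, d4⟩
    have g1 : (p:ℤ) ∣ ((Int.gcd X.re X.imI : ℕ) : ℤ) := Int.dvd_coe_gcd d1 d2
    have g2 : (p:ℤ) ∣ ((Int.gcd (Int.gcd X.re X.imI) X.imJ : ℕ) : ℤ) := Int.dvd_coe_gcd g1 d3
    have g3 : (p:ℤ) ∣ ((Int.gcd (Int.gcd (Int.gcd X.re X.imI) X.imJ) X.imK : ℕ) : ℤ) :=
      Int.dvd_coe_gcd g2 d4
    rw [hprim] at g3
    have := Int.le_of_dvd one_pos g3
    omega
  -- Existence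
  obtain ⟨Q, R, hQR, hRb, K, hK⟩ := quat_reduce (p:ℤ) hp0 hpodd X
  have hRne : R ≠ 0 := by
    intro h0
    rw [h0, add_zero] at hQR
    refine hX ⟨⟨Q.re, ?_⟩, ⟨Q.imI, ?_⟩, ⟨Q.imJ, ?_⟩, ⟨Q.imK, ?_⟩⟩ <;> rw [hQR] <;> simp
  have hRpos : 0 < normSq R := by
    rcases lt_or_eq_of_le (normSq_nonneg (a := R)) with h|h
    · exact h
    · exact absurd (normSq_eq_zero.mp h.symm) hRne
  obtain ⟨w, hw⟩ : (p:ℤ) ∣ normSq R := ⟨s - K, by linear_combination hs - hK⟩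
  have hwpos : 0 < w := by nlinarith
  have hwlt : w < (p:ℤ) := by nlinarith
  have hinvR : star R * X = (p:ℤ) • ((s • (1:ℍ[ℤ])) - star Q * X) := by
    have hR : R = X - (p:ℤ) • Q := by rw [hQR]; abel
    rw [hR, star_sub, star_zsmul', sub_mul, smul_mul_assoc, star_mul_self, hs, smul_sub]
    congr 1
    ext <;> simp
  obtain ⟨Y₀, hY₀, W₀, hW₀⟩ := descent p hp hpodd X hX w.toNat R
    (by rw [hw]; congr 1; omega) (by omega) (by omega) ⟨_, hinvR⟩
  have hXfac : X = Y₀ * W₀ := by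
    apply quat_smul_cancel (show (p:ℤ) ≠ 0 by omega)
    have e : Y₀ * (star Y₀ * X) = Y₀ * ((p:ℤ) • W₀) := by rw [hW₀]
    rw [← mul_assoc, self_mul_star, hY₀, coe_mul_eq_smul, mul_smul_comm] at e
    exact e
  refine ⟨⟨Y₀, hY₀, W₀, hXfac⟩, ?_⟩
  -- Uniqueness
  intro Y Y' hY hYU hY'U1 hY'U2
  obtain ⟨U, hU⟩ := hYU
  obtain ⟨U', hU'⟩ := hY'U2
  have hYX : star Y * X = (p:ℤ) • U := by
    rw [hU, ← mul_assoc, star_mul_self, hY, coe_mul_eq_smul]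
  have hY'X : star Y' * X = (p:ℤ) • U' := by
    rw [hU', ← mul_assoc, star_mul_self, hY'U1, coe_mul_eq_smul]
  obtain ⟨Qz, Rz, hQRz, hRbz, Kz, hKz⟩ := quat_reduce (p:ℤ) hp0 hpodd (star Y * Y')
  set Rq : ℍ[ℤ] := Y' - Y * Qz with hRqdef
  have hsr : star Y * Rq = Rz := by
    rw [hRqdef, mul_sub, ← mul_assoc, star_mul_self, hY, coe_mul_eq_smul, hQRz]
    abel
  have hnr : (p:ℤ) * normSq Rq = normSq Rz := by
    have h := map_mul normSq (star Y) Rq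
    rw [hsr, normSq_star, hY] at h
    exact h.symm
  have hinvRq : star Rq * X = (p:ℤ) • (U' - star Qz * U) := by
    rw [hRqdef, star_sub, star_mul, sub_mul, mul_assoc, hY'X, hYX, mul_smul_comm, smul_sub]
  have hdvdRq : (p:ℤ) ∣ normSq Rq := keyB hpp hX hinvRq
  have hRq0 : normSq Rq = 0 := by
    by_contra hne
    have h1 : (1:ℤ) ≤ normSq Rq := by
      have := normSq_nonneg (a := Rq); omega
    have hge : (p:ℤ) ≤ normSq Rq := Int.le_of_dvd (by omega) hdvdRq
    nlinarith
  have hRqz : Y' = Y * Qz := by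
    have h0 : Rq = 0 := normSq_eq_zero.mp hRq0
    rw [hRqdef] at h0
    exact sub_eq_zero.mp h0
  have hQznorm : normSq Qz = 1 := by
    have h := map_mul normSq Y Qz
    rw [← hRqz, hY'U1, hY] at h
    exact (mul_left_cancel₀ (show (p:ℤ) ≠ 0 by omega) (by linarith)).symm
  exact ⟨Qz, unit_mem Qz hQznorm, hRqz⟩
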